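/- Let D be an oriented graph with no induced TT3 and no induced S_{k,k}, and suppose every digraph in this class admits a triangle-free colouring with at most m colours. Then χ(D) ≤ (4k-2)·m. -/

import Mathlib

/-- The underlying simple graph of a digraph given by its arc relation. -/
def underlying {V : Type*} (A : V → V → Prop) : SimpleGraph V where
  Adj x y := x ≠ y ∧ (A x y ∨ A y x)
  symm := ⟨fun x y h => ⟨h.1.symm, h.2.symm⟩⟩
  loopless := ⟨fun x h => h.1 rfl⟩

/-- `A` admits a colouring with `c` colours in which no directed triangle is
monochromatic. -/
def TriFreeColorable {V : Type*} (A : V → V → Prop) (c : ℕ) : Prop :=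
  ∃ f : V → Fin c, ∀ u v w : V, A u v → A v w → A w u →
    ¬ (f u = f v ∧ f v = f w)

open Finset in
/-- Greedy colouring along a degeneracy order. -/
lemma greedy_aux {V : Type*} [Fintype V] [DecidableEq V] (G : SimpleGraph V)
    [DecidableRel G.Adj] (d : ℕ) (s : Finset V)
    (h : ∀ t ⊆ s, t.Nonempty → ∃ v ∈ t, (t.filter (G.Adj v)).card ≤ d) :
    ∃ g : V → Fin (d+1), ∀ u ∈ s, ∀ w ∈ s, G.Adj u w → g u ≠ g w := by
  classical
  induction s using Finset.strongInduction with
  | _ s ih =>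
    rcases s.eq_empty_or_nonempty with rfl | hne
    · exact ⟨fun _ => ⟨0, Nat.succ_pos d⟩, by simp⟩
    obtain ⟨v, hv, hdeg⟩ := h s subset_rfl hne
    obtain ⟨g, hg⟩ := ih (s.erase v) (erase_ssubset hv)
      (fun t ht htne => h t (ht.trans (erase_subset _ _)) htne)
    have hNsub : ((s.erase v).filter (G.Adj v)) ⊆ s.filter (G.Adj v) :=
      filter_subset_filter _ (erase_subset _ _)
    have hcard : (((s.erase v).filter (G.Adj v)).image g).card ≤ d :=
      le_trans card_image_le (le_trans (card_le_card hNsub) hdeg)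
    have hns : ¬ ((univ : Finset (Fin (d+1))) ⊆
        ((s.erase v).filter (G.Adj v)).image g) := by
      intro hsub
      have := card_le_card hsub
      simp only [card_univ, Fintype.card_fin] at this
      omega
    obtain ⟨c, _, hc⟩ := not_subset.mp hns
    refine ⟨Function.update g v c, ?_⟩
    intro u hu w hw huw
    rcases eq_or_ne u v with rfl | huv
    · have hwv : w ≠ u := fun hh => G.loopless.irrefl u (hh ▸ huw)
      rw [Function.update_self, Function.update_of_ne hwv]
      intro hcw
      exact hc (mem_image.mpr ⟨w, mem_filter.mpr ⟨mem_erase.mpr ⟨hwv, hw⟩, huw⟩, hcw.symm⟩)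
    · rcases eq_or_ne w v with rfl | hwv
      · rw [Function.update_self, Function.update_of_ne huv]
        intro hcw
        exact hc (mem_image.mpr ⟨u, mem_filter.mpr ⟨mem_erase.mpr ⟨huv, hu⟩, G.adj_symm huw⟩, hcw⟩)
      · rw [Function.update_of_ne huv, Function.update_of_ne hwv]
        exact hg u (mem_erase.mpr ⟨huv, hu⟩) w (mem_erase.mpr ⟨hwv, hw⟩) huw

open Finset in
/-- In a digraph with all out-degrees at most `d` inside `t`, some vertex has
underlying degree at most `2*d` inside `t`. -/
lemma exists_low_deg {V : Type*} [Fintype V] [DecidableEq V]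
    (A : V → V → Prop) (G : SimpleGraph V) [DecidableRel G.Adj]
    [DecidableRel A]
    (hG : ∀ x y, G.Adj x y → A x y ∨ A y x) (d : ℕ) (t : Finset V)
    (hout : ∀ v ∈ t, (t.filter (fun u => A v u)).card ≤ d) (hne : t.Nonempty) :
    ∃ v ∈ t, (t.filter (G.Adj v)).card ≤ 2*d := by
  classical
  by_contra hcon
  push_neg at hcon
  have key : ∀ v ∈ t, (t.filter (G.Adj v)).card ≤
      (t.filter (fun u => A v u)).card + (t.filter (fun u => A u v)).card := by
    intro v _
    calc (t.filter (G.Adj v)).card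
        ≤ ((t.filter (fun u => A v u)) ∪ (t.filter (fun u => A u v))).card := by
          apply card_le_card; intro u hu
          simp only [mem_filter, mem_union] at *
          rcases hG v u hu.2 with h | h
          · exact Or.inl ⟨hu.1, h⟩
          · exact Or.inr ⟨hu.1, h⟩
      _ ≤ _ := card_union_le _ _
  have hswap : ∑ v ∈ t, (t.filter (fun u => A u v)).card
      = ∑ v ∈ t, (t.filter (fun u => A v u)).card := by
    simp only [card_filter]
    rw [Finset.sum_comm]
  have h1 : ∑ v ∈ t, (t.filter (G.Adj v)).card ≤ 2 * d * t.card := by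
    calc ∑ v ∈ t, (t.filter (G.Adj v)).card
        ≤ ∑ v ∈ t, ((t.filter (fun u => A v u)).card
            + (t.filter (fun u => A u v)).card) := sum_le_sum key
      _ = ∑ v ∈ t, (t.filter (fun u => A v u)).card
            + ∑ v ∈ t, (t.filter (fun u => A u v)).card := sum_add_distrib
      _ = 2 * ∑ v ∈ t, (t.filter (fun u => A v u)).card := by rw [hswap]; ring
      _ ≤ 2 * (d * t.card) := by
          apply Nat.mul_le_mul_left
          calc ∑ v ∈ t, (t.filter (fun u => A v u)).card ≤ ∑ _v ∈ t, d :=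
              sum_le_sum hout
            _ = d * t.card := by rw [sum_const, smul_eq_mul, mul_comm]
      _ = 2 * d * t.card := by ring
  have h2 : ∑ _v ∈ t, (2*d+1) ≤ ∑ v ∈ t, (t.filter (G.Adj v)).card :=
    sum_le_sum (fun v hv => hcon v hv)
  rw [sum_const, smul_eq_mul] at h2
  have hpos : 0 < t.card := card_pos.mpr hne
  nlinarith [h1, h2, hpos]

theorem stmt11 {V : Type*} [Fintype V] [DecidableEq V] (k m : ℕ) (hk : 1 ≤ k)
    (A : V → V → Prop) (hasym : ∀ x y, A x y → ¬ A y x)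
    (hTT3 : ¬ ∃ u v w : V, A u v ∧ A v w ∧ A u w)
    (hSkk : ¬ ∃ (x : V) (s t : Finset V), s.card = k ∧ t.card = k ∧
      (∀ y ∈ s, A y x) ∧ (∀ y ∈ t, A x y) ∧
      (∀ y ∈ s ∪ t, ∀ z ∈ s ∪ t, y ≠ z → ¬ (underlying A).Adj y z))
    (hm : TriFreeColorable A m) :
    (underlying A).chromaticNumber ≤ (((4 * k - 2) * m : ℕ) : ℕ∞) := by
  classical
  open Finset in
  obtain ⟨f, hf⟩ := hm
  set G := underlying A with hGdef
  have hGadj : ∀ x y, G.Adj x y ↔ (x ≠ y ∧ (A x y ∨ A y x)) := fun x y => Iff.rfl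
  set inN : V → Finset V := fun v => univ.filter (fun u => A u v ∧ f u = f v) with hinN
  set outN : V → Finset V := fun v => univ.filter (fun u => A v u ∧ f u = f v) with houtN
  -- every vertex has small out- or in-neighbourhood inside its colour class
  have hside : ∀ v, (outN v).card < k ∨ (inN v).card < k := by
    intro v
    by_contra hcon
    push_neg at hcon
    obtain ⟨hout, hin⟩ := hcon
    obtain ⟨s, hs, hscard⟩ := Finset.exists_subset_card_eq hin
    obtain ⟨t, ht, htcard⟩ := Finset.exists_subset_card_eq hout
    have hsmem : ∀ y ∈ s, A y v ∧ f y = f v := by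
      intro y hy; exact (mem_filter.mp (hs hy)).2
    have htmem : ∀ y ∈ t, A v y ∧ f y = f v := by
      intro y hy; exact (mem_filter.mp (ht hy)).2
    apply hSkk
    refine ⟨v, s, t, hscard, htcard, fun y hy => (hsmem y hy).1,
      fun y hy => (htmem y hy).1, ?_⟩
    have key : ∀ a ∈ s ∪ t, ∀ b ∈ s ∪ t, A a b → False := by
      intro a ha b hb hab
      rcases mem_union.mp ha with ha' | ha' <;> rcases mem_union.mp hb with hb' | hb'
      · exact hTT3 ⟨a, b, v, hab, (hsmem b hb').1, (hsmem a ha').1⟩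
      · exact hTT3 ⟨a, v, b, (hsmem a ha').1, (htmem b hb').1, hab⟩
      · exact hf v a b (htmem a ha').1 hab (hsmem b hb').1
          ⟨(htmem a ha').2.symm, by rw [(htmem a ha').2, (hsmem b hb').2]⟩
      · exact hTT3 ⟨v, a, b, (htmem a ha').1, hab, (htmem b hb').1⟩
    intro y hy z hz hyz hadj
    rcases hadj.2 with h | h
    · exact key y hy z hz h
    · exact key z hz y hy h
  set side : V → Bool := fun v => decide ((outN v).card < k) with hsidedef
  -- a (2(k-1)+1)-colouring of each part
  have hpart : ∀ (i : Fin m) (b : Bool), ∃ g : V → Fin (2*(k-1)+1),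
      ∀ u, f u = i → side u = b → ∀ w, f w = i → side w = b →
        G.Adj u w → g u ≠ g w := by
    intro i b
    set S : Finset V := univ.filter (fun v => f v = i ∧ side v = b) with hS
    have hgre : ∀ t ⊆ S, t.Nonempty → ∃ v ∈ t, (t.filter (G.Adj v)).card ≤ 2*(k-1) := by
      intro t htS htne
      have hmem : ∀ v ∈ t, f v = i ∧ side v = b := by
        intro v hv; exact (mem_filter.mp (htS hv)).2
      cases b with
      | true =>
        refine exists_low_deg A G (fun x y h => h.2) (k-1) t ?_ htne
        intro v hv
        have hsub : t.filter (fun u => A v u) ⊆ outN v := by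
          intro u hu
          rw [houtN, mem_filter]
          refine ⟨mem_univ u, (mem_filter.mp hu).2, ?_⟩
          rw [(hmem u (mem_filter.mp hu).1).1, (hmem v hv).1]
        have hlt : (outN v).card < k := by
          have := (hmem v hv).2
          rw [hsidedef] at this
          simpa using this
        have := card_le_card hsub
        omega
      | false =>
        refine exists_low_deg (fun x y => A y x) G
          (fun x y h => h.2.symm) (k-1) t ?_ htne
        intro v hv
        show (t.filter (fun u => A u v)).card ≤ k - 1
        have hsub : t.filter (fun u => A u v) ⊆ inN v := by
          intro u hu
          rw [hinN, mem_filter]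
          refine ⟨mem_univ u, (mem_filter.mp hu).2, ?_⟩
          rw [(hmem u (mem_filter.mp hu).1).1, (hmem v hv).1]
        have hlt : (inN v).card < k := by
          have hsv := (hmem v hv).2
          rw [hsidedef] at hsv
          simp only [decide_eq_false_iff_not] at hsv
          rcases hside v with h | h
          · exact absurd h hsv
          · exact h
        have := card_le_card hsub
        omega
    obtain ⟨g, hg⟩ := greedy_aux G (2*(k-1)) S hgre
    refine ⟨g, fun u hu1 hu2 w hw1 hw2 hadj => ?_⟩
    exact hg u (mem_filter.mpr ⟨mem_univ u, hu1, hu2⟩)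
      w (mem_filter.mpr ⟨mem_univ w, hw1, hw2⟩) hadj
  choose g hg using hpart
  -- assemble the colouring
  have hcol : G.Colorable (m * (2 * (2*(k-1)+1))) := by
    have C : G.Coloring (Fin m × Bool × Fin (2*(k-1)+1)) := by
      refine SimpleGraph.Coloring.mk
        (fun v => (f v, side v, g (f v) (side v) v)) ?_
      intro u w hadj heq
      rw [Prod.ext_iff, Prod.ext_iff] at heq
      obtain ⟨h1, h2, h3⟩ := heq
      simp only at h1 h2 h3
      apply hg (f u) (side u) u rfl rfl w h1.symm h2.symm hadj
      rw [h3, h1, h2]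
    have := C.colorable
    simpa using this
  have hcol2 : G.Colorable ((4 * k - 2) * m) := by
    have heq : m * (2 * (2*(k-1)+1)) = (4*k-2)*m := by
      have h2 : 2 * (2*(k-1)+1) = 4*k-2 := by omega
      rw [h2, mul_comm]
    exact heq ▸ hcol
  exact hcol2.chromaticNumber_le
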